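/- Let χ be a non-principal Dirichlet character modulo N, τ ∈ ℍ, z ∈ ℂ. Then h_N(z; τ, χ) - h_N(z - √N; τ, χ) = (1/√(-iτ)) Σ_{k=1}^{N-1} χ(k) e^{iπ(z - k/√N)²/τ}, where h_N(z; τ, χ) = ∫_ℝ Φ_N(x; χ) e^{πiτx² - 2πzx} dx. -/

import Mathlib

open Finset Complex

noncomputable def PhiChi (N : ℕ) (χ : DirichletCharacter ℂ N) (t : ℂ) : ℂ :=
  (∑ k ∈ Finset.Ico 1 N, χ (k : ZMod N) * Complex.exp (2 * Real.pi * k * t / Real.sqrt N)) /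
    (1 - Complex.exp (2 * Real.pi * t * Real.sqrt N))

noncomputable def hN (N : ℕ) (χ : DirichletCharacter ℂ N) (τ z : ℂ) : ℂ :=
  ∫ x : ℝ, PhiChi N χ x *
    Complex.exp (Real.pi * Complex.I * τ * x ^ 2 - 2 * Real.pi * z * x)

lemma cexp_real_eq_one_iff (x : ℝ) : Complex.exp x = 1 ↔ x = 0 := by
  rw [← Complex.ofReal_exp, ← Complex.ofReal_one, Complex.ofReal_inj, Real.exp_eq_one_iff]

lemma my_abs_mono {s t u : ℝ} (hs : 0 ≤ s) (hst : s ≤ t) :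
    |Real.exp (s*u) - 1| ≤ |Real.exp (t*u) - 1| := by
  rcases le_or_gt 0 u with hu | hu
  · have h1 : 1 ≤ Real.exp (s*u) := Real.one_le_exp (by positivity)
    have h2 : Real.exp (s*u) ≤ Real.exp (t*u) := Real.exp_le_exp.mpr (by nlinarith)
    rw [_root_.abs_of_nonneg (sub_nonneg.mpr h1),
      _root_.abs_of_nonneg (sub_nonneg.mpr (h1.trans h2))]
    linarith
  · have h1 : Real.exp (s*u) ≤ 1 := Real.exp_le_one_iff.mpr (by nlinarith)
    have h2 : Real.exp (t*u) ≤ Real.exp (s*u) := Real.exp_le_exp.mpr (by nlinarith)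
    rw [abs_of_nonpos (sub_nonpos.mpr h1), abs_of_nonpos (sub_nonpos.mpr (h2.trans h1))]
    linarith

lemma my_sum_range (N : ℕ) [NeZero N] (f : ZMod N → ℂ) :
    ∑ k ∈ Finset.range N, f k = ∑ a : ZMod N, f a := by
  refine Finset.sum_nbij' (fun k => (k:ZMod N)) (fun a => a.val) ?_ ?_ ?_ ?_ ?_
  · exact fun k _ => Finset.mem_univ _
  · exact fun a _ => Finset.mem_range.mpr (ZMod.val_lt a)
  · exact fun k hk => ZMod.val_cast_of_lt (Finset.mem_range.mp hk)
  · exact fun a _ => by simp [ZMod.natCast_val, ZMod.cast_id]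
  · exact fun k _ => rfl

lemma my_char_sum_zero (N : ℕ) (hN2 : 2 ≤ N) (χ : DirichletCharacter ℂ N) (hχ : χ ≠ 1) :
    ∑ k ∈ Finset.Ico 1 N, χ (k : ZMod N) = 0 := by
  haveI : NeZero N := ⟨by omega⟩
  haveI : Fact (1 < N) := ⟨by omega⟩
  have h0 : ∑ a : ZMod N, χ a = 0 := MulChar.sum_eq_zero_of_ne_one hχ
  have h1 : ∑ k ∈ Finset.range N, χ (k : ZMod N) = 0 := by
    rw [my_sum_range]; exact h0
  rw [Finset.range_eq_Ico, Finset.sum_eq_sum_Ico_succ_bot (by omega : 0 < N)] at h1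
  have h3 : χ ((0:ℕ) : ZMod N) = 0 := by
    rw [Nat.cast_zero]
    exact χ.map_nonunit (by simp [not_isUnit_zero])
  rw [h3, zero_add] at h1
  exact h1

set_option maxHeartbeats 1000000 in
theorem hN_shift_one (N : ℕ) (χ : DirichletCharacter ℂ N) (hχ : χ ≠ 1)
    (τ : ℂ) (hτ : 0 < τ.im) (z : ℂ) :
    hN N χ τ z - hN N χ τ (z - Real.sqrt N) =
      (1 / (-Complex.I * τ) ^ (1 / 2 : ℂ)) *
        ∑ k ∈ Finset.Ico 1 N, χ (k : ZMod N) *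
          Complex.exp (Real.pi * Complex.I * (z - k / Real.sqrt N) ^ 2 / τ) := by
  -- trivial small cases
  rcases Nat.lt_or_ge N 2 with hN2 | hN2
  · interval_cases N
    · have he : Finset.Ico 1 0 = (∅ : Finset ℕ) := by simp
      simp [hN, PhiChi, he]
    · exact absurd (Subsingleton.elim χ 1) hχ
  -- main case
  have hNpos : (0:ℝ) < N := by exact_mod_cast (by omega : 0 < N)
  set sN : ℝ := Real.sqrt N with hsN_def
  have hsN : 0 < sN := Real.sqrt_pos.mpr hNpos
  have hsNsq : sN * sN = N := Real.mul_self_sqrt hNpos.le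
  have hτ0 : τ ≠ 0 := fun h => by rw [h] at hτ; simp at hτ
  have hπ : (Real.pi : ℂ) ≠ 0 := Complex.ofReal_ne_zero.mpr Real.pi_ne_zero
  have hsum : ∑ k ∈ Finset.Ico 1 N, χ (k : ZMod N) = 0 := my_char_sum_zero N hN2 χ hχ
  have hb : ((Real.pi : ℂ) * Complex.I * τ).re < 0 := by
    have : ((Real.pi : ℂ) * Complex.I * τ).re = -(Real.pi * τ.im) := by
      simp [Complex.mul_re, Complex.mul_im]
    rw [this]
    have := Real.pi_pos
    nlinarith
  -- pointwise key identity
  have hkey : ∀ x : ℝ, PhiChi N χ x * (1 - Complex.exp (2 * Real.pi * x * sN)) =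
      ∑ k ∈ Finset.Ico 1 N, χ (k : ZMod N) * Complex.exp (2 * Real.pi * k * x / sN) := by
    intro x
    by_cases hx : x = 0
    · subst hx
      have e1 : ((2:ℂ) * Real.pi * (0:ℝ) * sN) = 0 := by push_cast; ring
      rw [e1, Complex.exp_zero, sub_self, mul_zero, eq_comm]
      calc ∑ k ∈ Finset.Ico 1 N, χ (k : ZMod N) * Complex.exp (2 * Real.pi * k * (0:ℝ) / sN)
          = ∑ k ∈ Finset.Ico 1 N, χ (k : ZMod N) := by
            refine Finset.sum_congr rfl fun k _ => ?_
            rw [show ((2:ℂ) * Real.pi * k * (0:ℝ) / sN) = 0 by push_cast; ring,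
              Complex.exp_zero, mul_one]
        _ = 0 := hsum
    · have hden : (1 : ℂ) - Complex.exp (2 * Real.pi * x * sN) ≠ 0 := by
        rw [sub_ne_zero]
        intro h
        have h2 : Complex.exp ((2 * Real.pi * x * sN : ℝ) : ℂ) = 1 := by
          push_cast; rw [← h]
        rw [cexp_real_eq_one_iff] at h2
        have h2π : (0:ℝ) < Real.pi := Real.pi_pos
        rcases mul_eq_zero.mp h2 with h' | h'
        · rcases mul_eq_zero.mp h' with h'' | h''
          · nlinarith
          · exact hx h''
        · exact hsN.ne' h'
      rw [PhiChi, div_mul_cancel₀ _ hden]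
  -- boundedness of PhiChi
  have hbd : ∀ x : ℝ, ‖PhiChi N χ x‖ ≤ N := by
    intro x
    set u : ℝ := 2 * Real.pi * x / sN with hu_def
    have hterm : ∀ k : ℕ, ((2:ℂ) * Real.pi * k * x / sN) = (((k:ℝ) * u : ℝ) : ℂ) := by
      intro k; push_cast [hu_def]; ring
    have hden_term : ((2:ℂ) * Real.pi * x * sN) = (((N:ℝ) * u : ℝ) : ℂ) := by
      have hr : (N:ℝ) * u = 2 * Real.pi * x * sN := by
        rw [hu_def]
        field_simp
        linear_combination (-x) * hsNsq
      rw [hr]; push_cast; ring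
    have hnum : (∑ k ∈ Finset.Ico 1 N, χ (k : ZMod N) *
        Complex.exp (2 * Real.pi * k * (x:ℂ) / sN)) =
        ∑ k ∈ Finset.Ico 1 N, χ (k : ZMod N) * (Complex.exp ((((k:ℝ) * u : ℝ)):ℂ) - 1) := by
      have : ∀ k ∈ Finset.Ico 1 N, χ (k : ZMod N) * Complex.exp (2 * Real.pi * k * (x:ℂ) / sN)
          = χ (k : ZMod N) * (Complex.exp ((((k:ℝ) * u : ℝ)):ℂ) - 1) + χ (k : ZMod N) := by
        intro k _; rw [hterm k]; ring
      rw [Finset.sum_congr rfl this, Finset.sum_add_distrib, hsum, add_zero]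
    rw [PhiChi, ← hsN_def, hnum, hden_term]
    by_cases hx : x = 0
    · have : u = 0 := by rw [hu_def, hx]; simp
      simp [this]
    · have hNu : (N:ℝ) * u ≠ 0 := by
        have : u ≠ 0 := by
          rw [hu_def]
          have := Real.pi_ne_zero
          positivity
        positivity
      have hD : (0:ℝ) < |Real.exp ((N:ℝ)*u) - 1| := by
        rw [abs_pos, sub_ne_zero]
        intro h; rw [Real.exp_eq_one_iff] at h; exact hNu h
      have hdenorm : ‖(1:ℂ) - Complex.exp ((((N:ℝ) * u : ℝ)):ℂ)‖ = |Real.exp ((N:ℝ)*u) - 1| := by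
        rw [← Complex.ofReal_exp, ← Complex.ofReal_one, ← Complex.ofReal_sub, Complex.norm_real,
          Real.norm_eq_abs, abs_sub_comm]
      have hnumnorm : ‖∑ k ∈ Finset.Ico 1 N, χ (k : ZMod N) *
          (Complex.exp ((((k:ℝ) * u : ℝ)):ℂ) - 1)‖ ≤ (N:ℝ) * |Real.exp ((N:ℝ)*u) - 1| := by
        refine (norm_sum_le _ _).trans ?_
        have hle : ∀ k ∈ Finset.Ico 1 N, ‖χ (k : ZMod N) *
            (Complex.exp ((((k:ℝ) * u : ℝ)):ℂ) - 1)‖ ≤ |Real.exp ((N:ℝ)*u) - 1| := by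
          intro k hk
          rw [norm_mul]
          have h1 : ‖χ (k : ZMod N)‖ ≤ 1 := DirichletCharacter.norm_le_one χ _
          have h2 : ‖Complex.exp ((((k:ℝ) * u : ℝ)):ℂ) - 1‖ = |Real.exp ((k:ℝ)*u) - 1| := by
            rw [← Complex.ofReal_exp, ← Complex.ofReal_one, ← Complex.ofReal_sub,
              Complex.norm_real, Real.norm_eq_abs]
          rw [h2]
          calc ‖χ (k : ZMod N)‖ * |Real.exp ((k:ℝ)*u) - 1|
              ≤ 1 * |Real.exp ((k:ℝ)*u) - 1| := by
                exact mul_le_mul_of_nonneg_right h1 (abs_nonneg _)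
            _ = |Real.exp ((k:ℝ)*u) - 1| := one_mul _
            _ ≤ |Real.exp ((N:ℝ)*u) - 1| := by
                refine my_abs_mono (by positivity) ?_
                exact_mod_cast (Finset.mem_Ico.mp hk).2.le
        refine (Finset.sum_le_sum hle).trans ?_
        rw [Finset.sum_const, nsmul_eq_mul]
        have hcard : ((Finset.Ico 1 N).card : ℝ) ≤ (N:ℝ) := by
          rw [Nat.card_Ico]; exact_mod_cast Nat.sub_le N 1
        exact mul_le_mul_of_nonneg_right hcard (abs_nonneg _)
      rw [norm_div, hdenorm]
      rw [div_le_iff₀ hD]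
      exact hnumnorm
  -- integrability
  have hGint : ∀ w : ℂ, MeasureTheory.Integrable
      (fun x : ℝ => Complex.exp (Real.pi * Complex.I * τ * x ^ 2 - 2 * Real.pi * w * x)) := by
    intro w
    have := integrable_cexp_quadratic' hb (-(2 * Real.pi * w)) 0
    refine this.congr (Filter.Eventually.of_forall fun x => ?_)
    show Complex.exp (Real.pi * Complex.I * τ * x ^ 2 + -(2 * Real.pi * w) * x + 0)
        = Complex.exp (Real.pi * Complex.I * τ * x ^ 2 - 2 * Real.pi * w * x)
    exact congrArg Complex.exp (by ring)
  have hmeas : MeasureTheory.AEStronglyMeasurable (fun x : ℝ => PhiChi N χ x)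
      MeasureTheory.volume := by
    apply Measurable.aestronglyMeasurable
    apply Measurable.div
    · exact (Continuous.measurable (by continuity))
    · exact (Continuous.measurable (by continuity))
  have hint : ∀ w : ℂ, MeasureTheory.Integrable (fun x : ℝ =>
      PhiChi N χ x * Complex.exp (Real.pi * Complex.I * τ * x ^ 2 - 2 * Real.pi * w * x)) := by
    intro w
    exact (hGint w).bdd_mul hmeas (Filter.Eventually.of_forall hbd)
  -- Gaussian integral evaluation
  have harg : (-Complex.I * τ).arg ≠ Real.pi := by
    intro h
    rw [Complex.arg_eq_pi_iff] at h
    have : (-Complex.I * τ).re = τ.im := by simp [Complex.mul_re]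
    rw [this] at h
    linarith [h.1]
  have hGauss : ∀ w : ℂ, (∫ x : ℝ, Complex.exp (Real.pi * Complex.I * τ * x ^ 2
      - 2 * Real.pi * w * x)) =
      (1 / (-Complex.I * τ) ^ (1 / 2 : ℂ)) * Complex.exp (Real.pi * Complex.I * w ^ 2 / τ) := by
    intro w
    have heq : (fun x : ℝ => Complex.exp (Real.pi * Complex.I * τ * x ^ 2 - 2 * Real.pi * w * x))
        = fun x : ℝ => Complex.exp ((Real.pi * Complex.I * τ) * x ^ 2
          + (-(2 * Real.pi * w)) * x + 0) := by
      funext x; exact (congrArg Complex.exp (by ring)).symm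
    rw [heq, integral_cexp_quadratic hb]
    congr 1
    · rw [show ((Real.pi : ℂ) / -(Real.pi * Complex.I * τ)) = (-Complex.I * τ)⁻¹ by
        field_simp]
      rw [Complex.inv_cpow _ _ harg]
      exact (one_div _).symm
    · congr 1
      have hI : Complex.I ≠ 0 := Complex.I_ne_zero
      field_simp
      ring_nf
      rw [Complex.I_sq]
      ring
  -- main computation
  have hptwise : ∀ x : ℝ,
      PhiChi N χ x * Complex.exp (Real.pi * Complex.I * τ * x ^ 2 - 2 * Real.pi * z * x)
      - PhiChi N χ x * Complex.exp (Real.pi * Complex.I * τ * x ^ 2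
        - 2 * Real.pi * (z - (sN:ℂ)) * x) =
      ∑ k ∈ Finset.Ico 1 N, χ (k : ZMod N) *
        Complex.exp (Real.pi * Complex.I * τ * x ^ 2 - 2 * Real.pi * (z - k / (sN:ℂ)) * x) := by
    intro x
    have e2 : Complex.exp (Real.pi * Complex.I * τ * x ^ 2 - 2 * Real.pi * (z - (sN:ℂ)) * x)
        = Complex.exp (2 * Real.pi * x * sN)
          * Complex.exp (Real.pi * Complex.I * τ * x ^ 2 - 2 * Real.pi * z * x) := by
      rw [← Complex.exp_add]; congr 1; ring
    rw [e2, show PhiChi N χ x * Complex.exp (Real.pi * Complex.I * τ * x ^ 2 - 2 * Real.pi * z * x)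
      - PhiChi N χ x * (Complex.exp (2 * Real.pi * x * sN)
        * Complex.exp (Real.pi * Complex.I * τ * x ^ 2 - 2 * Real.pi * z * x))
      = (PhiChi N χ x * (1 - Complex.exp (2 * Real.pi * x * sN)))
        * Complex.exp (Real.pi * Complex.I * τ * x ^ 2 - 2 * Real.pi * z * x) by ring,
      hkey x, Finset.sum_mul]
    refine Finset.sum_congr rfl fun k _ => ?_
    rw [mul_assoc, ← Complex.exp_add]
    congr 2
    ring
  calc hN N χ τ z - hN N χ τ (z - (sN:ℂ))
      = ∫ x : ℝ, (PhiChi N χ x * Complex.exp (Real.pi * Complex.I * τ * x ^ 2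
          - 2 * Real.pi * z * x)
        - PhiChi N χ x * Complex.exp (Real.pi * Complex.I * τ * x ^ 2
          - 2 * Real.pi * (z - (sN:ℂ)) * x)) := by
        rw [hN, hN, ← MeasureTheory.integral_sub (hint z) (hint (z - (sN:ℂ)))]
    _ = ∫ x : ℝ, ∑ k ∈ Finset.Ico 1 N, χ (k : ZMod N) *
          Complex.exp (Real.pi * Complex.I * τ * x ^ 2 - 2 * Real.pi * (z - k / (sN:ℂ)) * x) := by
        exact MeasureTheory.integral_congr_ae (Filter.Eventually.of_forall hptwise)
    _ = ∑ k ∈ Finset.Ico 1 N, ∫ x : ℝ, χ (k : ZMod N) *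
          Complex.exp (Real.pi * Complex.I * τ * x ^ 2 - 2 * Real.pi * (z - k / (sN:ℂ)) * x) := by
        refine MeasureTheory.integral_finset_sum _ fun k _ => ?_
        exact (hGint (z - k / (sN:ℂ))).const_mul _
    _ = ∑ k ∈ Finset.Ico 1 N, χ (k : ZMod N) * ((1 / (-Complex.I * τ) ^ (1 / 2 : ℂ))
          * Complex.exp (Real.pi * Complex.I * (z - k / (sN:ℂ)) ^ 2 / τ)) := by
        refine Finset.sum_congr rfl fun k _ => ?_
        rw [MeasureTheory.integral_const_mul, hGauss]
    _ = (1 / (-Complex.I * τ) ^ (1 / 2 : ℂ)) * ∑ k ∈ Finset.Ico 1 N, χ (k : ZMod N) *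
          Complex.exp (Real.pi * Complex.I * (z - k / (sN:ℂ)) ^ 2 / τ) := by
        rw [Finset.mul_sum]
        exact Finset.sum_congr rfl fun k _ => by ring
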